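/- A 2-dimensional subspace W of the space of trace-free symmetric real 3×3 matrices satisfies SO(3)·W = 𝔭 (every trace-free symmetric matrix is SO(3)-conjugate to an element of W) if and only if W contains a nonzero matrix with two equal eigenvalues. -/

import Mathlib

open Matrix Polynomial

namespace Stmt7Aux

abbrev Mat := Matrix (Fin 3) (Fin 3) ℝ

lemma spec (A : Mat) (h : Aᵀ = A) :
    ∃ (U : Mat) (lam : Fin 3 → ℝ), U * Uᵀ = 1 ∧ Uᵀ * U = 1 ∧ A = U * diagonal lam * Uᵀ := by
  have hA : A.IsHermitian := by
    rw [Matrix.IsHermitian, conjTranspose_eq_transpose_of_trivial, h]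
  refine ⟨hA.eigenvectorUnitary, hA.eigenvalues, ?_, ?_, ?_⟩
  · have := (Matrix.mem_unitaryGroup_iff).mp hA.eigenvectorUnitary.2
    rwa [star_eq_conjTranspose, conjTranspose_eq_transpose_of_trivial] at this
  · have := (Matrix.mem_unitaryGroup_iff').mp hA.eigenvectorUnitary.2
    rwa [star_eq_conjTranspose, conjTranspose_eq_transpose_of_trivial] at this
  · have := hA.spectral_theorem
    rwa [Unitary.conjStarAlgAut_apply, star_eq_conjTranspose, conjTranspose_eq_transpose_of_trivial] at this

lemma charpoly_conj (U M : Mat) (hU : U * Uᵀ = 1) : (U * M * Uᵀ).charpoly = M.charpoly := by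
  have hU' : Uᵀ * U = 1 := mul_eq_one_comm.mp hU
  have h1 : (C : ℝ →+* ℝ[X]).mapMatrix U * (C : ℝ →+* ℝ[X]).mapMatrix Uᵀ = 1 := by
    rw [← _root_.map_mul, hU, _root_.map_one]
  have key : charmatrix (U * M * Uᵀ) =
      ((C : ℝ →+* ℝ[X]).mapMatrix U) * charmatrix M * ((C : ℝ →+* ℝ[X]).mapMatrix Uᵀ) := by
    simp only [charmatrix, mul_sub, sub_mul]
    congr 1
    · rw [mul_assoc, (scalar_commute (X : ℝ[X]) (Commute.all _) _).eq, ← mul_assoc, h1, one_mul]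
    · simp [← _root_.map_mul, Matrix.mul_assoc]
  have hdet : ((C : ℝ →+* ℝ[X]).mapMatrix U).det * ((C : ℝ →+* ℝ[X]).mapMatrix Uᵀ).det = 1 := by
    rw [← det_mul, h1, det_one]
  rw [Matrix.charpoly, Matrix.charpoly, key, det_mul, det_mul]
  rw [mul_right_comm, hdet, one_mul]

lemma charpoly_diag (d : Fin 3 → ℝ) : (diagonal d).charpoly = ∏ i, (X - C (d i)) := by
  rw [charpoly_of_upperTriangular _ (blockTriangular_diagonal d)]
  simp

lemma cubic (a b c : ℝ) : (X - C a) * (X - C b) * (X - C c)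
    = X^3 - C (a+b+c)*X^2 + C (a*b+a*c+b*c)*X - C (a*b*c) := by
  simp only [C_add, C_mul]; ring

lemma roots_cubic (a b c : ℝ) : ((X - C a) * (X - C b) * (X - C c)).roots = {a, b, c} := by
  rw [roots_mul (mul_ne_zero (mul_ne_zero (X_sub_C_ne_zero a) (X_sub_C_ne_zero b))
      (X_sub_C_ne_zero c)),
    roots_mul (mul_ne_zero (X_sub_C_ne_zero a) (X_sub_C_ne_zero b)),
    roots_X_sub_C, roots_X_sub_C, roots_X_sub_C]
  rfl

lemma ms_eq (a0 a1 a2 b0 b1 b2 : ℝ)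
    (h1 : a0 + a1 + a2 = b0 + b1 + b2)
    (h2 : a0^2 + a1^2 + a2^2 = b0^2 + b1^2 + b2^2)
    (h3 : a0 * a1 * a2 = b0 * b1 * b2) :
    ({a0, a1, a2} : Multiset ℝ) = {b0, b1, b2} := by
  have e2 : a0*a1 + a0*a2 + a1*a2 = b0*b1 + b0*b2 + b1*b2 := by
    linear_combination ((a0+a1+a2+b0+b1+b2)/2) * h1 - (1/2) * h2
  have hp : (X - C a0) * (X - C a1) * (X - C a2) = (X - C b0) * (X - C b1) * (X - C b2) := by
    rw [cubic, cubic, h1, e2, h3]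
  rw [← roots_cubic a0 a1 a2, hp, roots_cubic]

lemma ms_sum {a0 a1 a2 b0 b1 b2 : ℝ} (h : ({a0, a1, a2} : Multiset ℝ) = {b0, b1, b2}) :
    a0 + a1 + a2 = b0 + b1 + b2 := by
  have := congrArg Multiset.sum h
  simpa [add_assoc] using this

lemma ms_sumsq {a0 a1 a2 b0 b1 b2 : ℝ} (h : ({a0, a1, a2} : Multiset ℝ) = {b0, b1, b2}) :
    a0^2 + a1^2 + a2^2 = b0^2 + b1^2 + b2^2 := by
  have := congrArg (fun m : Multiset ℝ => (m.map (fun x => x^2)).sum) h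
  simpa [add_assoc] using this

lemma ms_prod {a0 a1 a2 b0 b1 b2 : ℝ} (h : ({a0, a1, a2} : Multiset ℝ) = {b0, b1, b2}) :
    a0 * a1 * a2 = b0 * b1 * b2 := by
  have := congrArg Multiset.prod h
  simpa [mul_assoc] using this

lemma eig_ineq (a b c : ℝ) (h : a + b + c = 0) :
    54 * (a*b*c)^2 ≤ (a^2+b^2+c^2)^3 := by
  have hc : c = -a - b := by linarith
  subst hc
  nlinarith [sq_nonneg ((a-b)*(a+2*b)*(2*a+b)), sq_nonneg (a+b), sq_nonneg (a-b),
    sq_nonneg (a*b)]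

lemma fact_trace (U : Mat) (lam : Fin 3 → ℝ) (hU' : Uᵀ * U = 1) :
    (U * diagonal lam * Uᵀ).trace = lam 0 + lam 1 + lam 2 := by
  rw [trace_mul_cycle, hU', one_mul, trace_diagonal, Fin.sum_univ_three]

lemma fact_sq (U : Mat) (lam : Fin 3 → ℝ) (hU' : Uᵀ * U = 1) :
    ((U * diagonal lam * Uᵀ) * (U * diagonal lam * Uᵀ)).trace
      = (lam 0)^2 + (lam 1)^2 + (lam 2)^2 := by
  have e : Uᵀ * (U * diagonal lam * Uᵀ) = diagonal lam * Uᵀ := by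
    rw [← Matrix.mul_assoc, ← Matrix.mul_assoc, hU', one_mul]
  have h2 : (U * diagonal lam * Uᵀ) * (U * diagonal lam * Uᵀ)
      = U * diagonal (fun i => lam i * lam i) * Uᵀ := by
    rw [Matrix.mul_assoc (U * diagonal lam), e, Matrix.mul_assoc U,
      ← Matrix.mul_assoc (diagonal lam), diagonal_mul_diagonal, ← Matrix.mul_assoc]
  rw [h2, trace_mul_cycle, hU', one_mul, trace_diagonal, Fin.sum_univ_three]
  ring

lemma fact_det (U : Mat) (lam : Fin 3 → ℝ) (hU : U * Uᵀ = 1) :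
    (U * diagonal lam * Uᵀ).det = lam 0 * lam 1 * lam 2 := by
  have h1 : U.det * Uᵀ.det = 1 := by rw [← det_mul, hU, det_one]
  rw [det_mul, det_mul, mul_right_comm, h1, one_mul, det_diagonal, Fin.prod_univ_three]

lemma fact_charpoly (U : Mat) (lam : Fin 3 → ℝ) (hU : U * Uᵀ = 1) :
    (U * diagonal lam * Uᵀ).charpoly
      = (X - C (lam 0)) * (X - C (lam 1)) * (X - C (lam 2)) := by
  rw [charpoly_conj U (diagonal lam) hU, charpoly_diag, Fin.prod_univ_three]

lemma exists_perm (a b : Fin 3 → ℝ)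
    (h : Finset.univ.val.map a = Finset.univ.val.map b) :
    ∃ σ : Equiv.Perm (Fin 3), ∀ i, a i = b (σ i) := by
  classical
  set σa := Tuple.sort a
  set σb := Tuple.sort b
  have ha : Monotone (a ∘ σa) := Tuple.monotone_sort a
  have hb : Monotone (b ∘ σb) := Tuple.monotone_sort b
  have hma : (↑(List.ofFn (a ∘ σa)) : Multiset ℝ) = Finset.univ.val.map a := by
    rw [← Fin.univ_val_map, ← Multiset.map_map, Multiset.map_univ_val_equiv]
  have hmb : (↑(List.ofFn (b ∘ σb)) : Multiset ℝ) = Finset.univ.val.map b := by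
    rw [← Fin.univ_val_map, ← Multiset.map_map, Multiset.map_univ_val_equiv]
  have hperm : List.Perm (List.ofFn (a ∘ σa)) (List.ofFn (b ∘ σb)) := by
    rw [← Multiset.coe_eq_coe, hma, hmb, h]
  have hl : List.ofFn (a ∘ σa) = List.ofFn (b ∘ σb) :=
    hperm.eq_of_sortedLE ha.sortedLE_ofFn hb.sortedLE_ofFn
  have hfun : a ∘ σa = b ∘ σb := List.ofFn_injective hl
  refine ⟨σa.symm.trans σb, fun i => ?_⟩
  have := congrFun hfun (σa.symm i)
  simpa using this

lemma univ_map_eq (f : Fin 3 → ℝ) : Finset.univ.val.map f = ({f 0, f 1, f 2} : Multiset ℝ) := by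
  rw [Fin.univ_val_map]
  rfl

lemma trace_sq_eq (M : Mat) (h : Mᵀ = M) :
    (M * M).trace = ∑ i, ∑ j, (M i j)^2 := by
  simp only [Matrix.trace, Matrix.diag, Matrix.mul_apply]
  rw [Finset.sum_comm]
  refine Finset.sum_congr rfl fun i _ => Finset.sum_congr rfl fun j _ => ?_
  have e : M i j = M j i := congrFun (congrFun h j) i
  rw [← e]; ring

lemma trace_sq_pos (M : Mat) (h : Mᵀ = M) (hM : M ≠ 0) :
    0 < (M * M).trace := by
  rw [trace_sq_eq M h]
  have hne : ∃ i j, M i j ≠ 0 := by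
    by_contra hc
    push_neg at hc
    exact hM (by ext i j; simp [hc])
  obtain ⟨i, j, hij⟩ := hne
  refine Finset.sum_pos' (fun k _ => Finset.sum_nonneg fun l _ => sq_nonneg _)
    ⟨i, Finset.mem_univ i, Finset.sum_pos' (fun l _ => sq_nonneg _)
      ⟨j, Finset.mem_univ j, sq_pos_of_ne_zero hij⟩⟩

lemma trace_sq_nonneg (M : Mat) (h : Mᵀ = M) : 0 ≤ (M * M).trace := by
  rw [trace_sq_eq M h]
  positivity

lemma perm_conj (σ : Equiv.Perm (Fin 3)) (d : Fin 3 → ℝ) :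
    ∃ P : Mat, P * Pᵀ = 1 ∧ P * diagonal d * Pᵀ = diagonal (d ∘ σ) := by
  refine ⟨σ.toPEquiv.toMatrix, ?_, ?_⟩
  · rw [← PEquiv.toMatrix_symm, ← Equiv.toPEquiv_symm, ← PEquiv.toMatrix_trans,
      ← Equiv.toPEquiv_trans, Equiv.self_trans_symm, Equiv.toPEquiv_refl, PEquiv.toMatrix_refl]
  · rw [PEquiv.toMatrix_toPEquiv_mul, ← PEquiv.toMatrix_symm, ← Equiv.toPEquiv_symm,
      PEquiv.mul_toMatrix_toPEquiv, Equiv.symm_symm, Matrix.submatrix_submatrix,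
      Function.comp_id, Function.id_comp, submatrix_diagonal_equiv]

lemma sign_fix (V E : Mat) (hV : V * Vᵀ = 1) (hE : E * E = 1) (hEt : Eᵀ = E) :
    (V * E * Vᵀ) * (V * E * Vᵀ)ᵀ = 1 := by
  have hV' : Vᵀ * V = 1 := mul_eq_one_comm.mp hV
  rw [transpose_mul, transpose_mul, transpose_transpose, hEt]
  calc V * E * Vᵀ * (V * (E * Vᵀ)) = V * E * (Vᵀ * V) * (E * Vᵀ) := by
        noncomm_ring
    _ = 1 := by rw [hV', mul_one, mul_assoc, ← Matrix.mul_assoc E E, hE, Matrix.one_mul, hV]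

lemma my_conj_mul (k1 k2 M : Mat) : (k1 * k2) * M * (k1 * k2)ᵀ = k1 * (k2 * M * k2ᵀ) * k1ᵀ := by
  rw [transpose_mul]; noncomm_ring

lemma orth_mul {k1 k2 : Mat} (h1 : k1 * k1ᵀ = 1) (h2 : k2 * k2ᵀ = 1) :
    (k1 * k2) * (k1 * k2)ᵀ = 1 := by
  rw [transpose_mul]
  calc k1 * k2 * (k2ᵀ * k1ᵀ) = k1 * (k2 * k2ᵀ) * k1ᵀ := by noncomm_ring
    _ = 1 := by rw [h2, mul_one, h1]

lemma orth_transpose {V : Mat} (hV : V * Vᵀ = 1) : Vᵀ * Vᵀᵀ = 1 := by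
  rw [transpose_transpose]; exact mul_eq_one_comm.mp hV

lemma unconj (V D w : Mat) (hV : V * Vᵀ = 1) (hw : w = V * D * Vᵀ) :
    Vᵀ * w * Vᵀᵀ = D := by
  have hV' : Vᵀ * V = 1 := mul_eq_one_comm.mp hV
  rw [transpose_transpose, hw]
  calc Vᵀ * (V * D * Vᵀ) * V = (Vᵀ * V) * D * (Vᵀ * V) := by noncomm_ring
    _ = D := by rw [hV', one_mul, mul_one]

lemma conj_of_eigen (A w U V : Mat) (lamA lamW : Fin 3 → ℝ)
    (hU : U * Uᵀ = 1) (hV : V * Vᵀ = 1)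
    (hA : A = U * diagonal lamA * Uᵀ) (hw : w = V * diagonal lamW * Vᵀ)
    (σ : Equiv.Perm (Fin 3)) (hperm : ∀ i, lamA i = lamW (σ i)) :
    ∃ k : Mat, k * kᵀ = 1 ∧ k.det = 1 ∧ k * w * kᵀ = A := by
  obtain ⟨P, hP, hPD⟩ := perm_conj σ lamW
  have hcomp : lamW ∘ σ = lamA := by funext i; exact (hperm i).symm
  set k₀ := (U * P) * Vᵀ with hk₀
  have hk₀o : k₀ * k₀ᵀ = 1 := orth_mul (orth_mul hU hP) (orth_transpose hV)
  have hk₀c : k₀ * w * k₀ᵀ = A := by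
    rw [hk₀, my_conj_mul (U*P) Vᵀ w, unconj V (diagonal lamW) w hV hw,
      my_conj_mul U P, hPD, hcomp]
    exact hA.symm
  have hdet2 : k₀.det * k₀.det = 1 := by
    have h := congrArg Matrix.det hk₀o
    rwa [det_mul, det_transpose, det_one] at h
  rcases mul_self_eq_one_iff.mp hdet2 with hd | hd
  · exact ⟨k₀, hk₀o, hd, hk₀c⟩
  · set E : Mat := diagonal ![(-1:ℝ),1,1] with hEdef
    have hEt : Eᵀ = E := diagonal_transpose _
    have hEE : E * E = 1 := by
      rw [hEdef, diagonal_mul_diagonal]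
      have h1 : (fun i => ![(-1:ℝ),1,1] i * ![(-1:ℝ),1,1] i) = fun _ => (1:ℝ) := by
        funext i; fin_cases i <;> norm_num
      rw [h1, diagonal_one]
    have hEDE : E * diagonal lamW * E = diagonal lamW := by
      have harg : (fun i => ![(-1:ℝ),1,1] i * lamW i * ![(-1:ℝ),1,1] i) = lamW := by
        funext i; fin_cases i <;> simp
      rw [hEdef, diagonal_mul_diagonal, diagonal_mul_diagonal, harg]
    have hdetE : E.det = -1 := by
      rw [hEdef, det_diagonal, Fin.prod_univ_three]
      norm_num [Matrix.cons_val_two]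
    set Q : Mat := V * E * Vᵀ with hQdef
    have hQo : Q * Qᵀ = 1 := sign_fix V E hV hEE hEt
    have hV' : Vᵀ * V = 1 := mul_eq_one_comm.mp hV
    have hQw : Q * w * Qᵀ = w := by
      rw [hQdef, transpose_mul, transpose_mul, transpose_transpose, hEt, hw]
      calc V * E * Vᵀ * (V * diagonal lamW * Vᵀ) * (V * (E * Vᵀ))
          = V * (E * (Vᵀ * V) * diagonal lamW * (Vᵀ * V) * E) * Vᵀ := by noncomm_ring
        _ = V * (E * diagonal lamW * E) * Vᵀ := by rw [hV', mul_one, mul_one]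
        _ = V * diagonal lamW * Vᵀ := by rw [hEDE]
    have hdetQ : Q.det = -1 := by
      have hdV : V.det * Vᵀ.det = 1 := by rw [← det_mul, hV, det_one]
      rw [hQdef, det_mul, det_mul, hdetE, mul_right_comm, hdV]
      norm_num
    refine ⟨k₀ * Q, orth_mul hk₀o hQo, ?_, ?_⟩
    · rw [det_mul, hd, hdetQ]; norm_num
    · rw [my_conj_mul, hQw, hk₀c]

/-- Two symmetric matrices with the same trace, trace of square, and determinant are
SO(3)-conjugate. -/
lemma conj_of_invariants (A w : Mat) (hAs : Aᵀ = A) (hws : wᵀ = w)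
    (h1 : A.trace = w.trace) (h2 : (A*A).trace = (w*w).trace) (h3 : A.det = w.det) :
    ∃ k : Mat, k * kᵀ = 1 ∧ k.det = 1 ∧ k * w * kᵀ = A := by
  obtain ⟨U, lamA, hU, hU', hdA⟩ := spec A hAs
  obtain ⟨V, lamW, hV, hV', hdW⟩ := spec w hws
  have e1 : lamA 0 + lamA 1 + lamA 2 = lamW 0 + lamW 1 + lamW 2 := by
    have := h1; rwa [hdA, hdW, fact_trace U lamA hU', fact_trace V lamW hV'] at this
  have e2 : (lamA 0)^2 + (lamA 1)^2 + (lamA 2)^2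
      = (lamW 0)^2 + (lamW 1)^2 + (lamW 2)^2 := by
    have := h2; rwa [hdA, hdW, fact_sq U lamA hU', fact_sq V lamW hV'] at this
  have e3 : lamA 0 * lamA 1 * lamA 2 = lamW 0 * lamW 1 * lamW 2 := by
    have := h3; rwa [hdA, hdW, fact_det U lamA hU, fact_det V lamW hV] at this
  have hms : Finset.univ.val.map lamA = Finset.univ.val.map lamW := by
    rw [univ_map_eq, univ_map_eq]
    exact ms_eq _ _ _ _ _ _ e1 e2 e3
  obtain ⟨σ, hσ⟩ := exists_perm lamA lamW hms
  exact conj_of_eigen A w U V lamA lamW hU hV hdA hdW σ hσ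

end Stmt7Aux

open Stmt7Aux in
theorem stmt7 (W : Submodule ℝ (Matrix (Fin 3) (Fin 3) ℝ))
    (hW : ∀ X ∈ W, Xᵀ = X ∧ X.trace = 0)
    (hdim : Module.finrank ℝ W = 2) :
    (∀ A : Matrix (Fin 3) (Fin 3) ℝ, Aᵀ = A → A.trace = 0 →
      ∃ (k : Matrix (Fin 3) (Fin 3) ℝ) (w : Matrix (Fin 3) (Fin 3) ℝ),
        w ∈ W ∧ k * kᵀ = 1 ∧ k.det = 1 ∧ k * w * kᵀ = A) ↔
    (∃ X ∈ W, X ≠ 0 ∧ ∃ t : ℝ, (Polynomial.X - C t) ^ 2 ∣ X.charpoly) := by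
  constructor
  · intro hsurj
    set A : Mat := diagonal ![1,1,-2] with hAdef
    have hAs : Aᵀ = A := diagonal_transpose _
    have hAtr : A.trace = 0 := by
      rw [hAdef, trace_diagonal, Fin.sum_univ_three]
      norm_num [Matrix.cons_val_two]
    obtain ⟨k, w, hwW, hk, hdet, hkw⟩ := hsurj A hAs hAtr
    have hwA : kᵀ * A * kᵀᵀ = w := unconj k w A hk hkw.symm
    have hcp : w.charpoly = A.charpoly := by
      rw [← hwA]; exact charpoly_conj kᵀ A (orth_transpose hk)
    have hcpA : A.charpoly
        = (Polynomial.X - C 1) * (Polynomial.X - C 1) * (Polynomial.X - C (-2)) := by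
      rw [hAdef, charpoly_diag, Fin.prod_univ_three]
      norm_num [Matrix.cons_val_two]
    refine ⟨w, hwW, ?_, 1, ?_⟩
    · intro h0
      rw [h0, Matrix.mul_zero, Matrix.zero_mul] at hkw
      have h00 := congrFun (congrFun hkw 0) 0
      simp [hAdef] at h00
    · rw [hcp, hcpA, sq]
      exact ⟨Polynomial.X - C (-2), by ring⟩
  · rintro ⟨X0, hX0W, hX0ne, t, hdvd⟩
    obtain ⟨hX0s, hX0tr⟩ := hW X0 hX0W
    obtain ⟨U0, lam, hU0, hU0', hdec⟩ := spec X0 hX0s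
    have hcp : X0.charpoly
        = (Polynomial.X - C (lam 0)) * (Polynomial.X - C (lam 1))
          * (Polynomial.X - C (lam 2)) := by
      rw [hdec]; exact fact_charpoly U0 lam hU0
    obtain ⟨q, hq⟩ := hdvd
    have hmono : X0.charpoly.Monic := X0.charpoly_monic
    have h2m : ((Polynomial.X - C t)^2).Monic := (monic_X_sub_C t).pow 2
    have hqm : q.Monic := h2m.of_mul_monic_left (hq ▸ hmono)
    have hdeg : X0.charpoly.natDegree = 3 := by
      rw [Matrix.charpoly_natDegree_eq_dim]; simp
    have hqdeg : q.natDegree = 1 := by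
      have h5 := hdeg
      rw [hq, h2m.natDegree_mul hqm, natDegree_pow, natDegree_X_sub_C] at h5
      omega
    set s : ℝ := -(q.coeff 0) with hsdef
    have hqq : q = Polynomial.X - C s := by
      have h6 := hqm.eq_X_add_C hqdeg
      rw [h6, hsdef, map_neg]; ring
    have hfac : X0.charpoly
        = (Polynomial.X - C t) * (Polynomial.X - C t) * (Polynomial.X - C s) := by
      rw [hq, hqq]; ring
    have hmseq : ({lam 0, lam 1, lam 2} : Multiset ℝ) = {t, t, s} := by
      have h7 := congrArg Polynomial.roots (hcp.symm.trans hfac)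
      rwa [roots_cubic, roots_cubic] at h7
    have hsum : lam 0 + lam 1 + lam 2 = t + t + s := ms_sum hmseq
    have hsumsq : (lam 0)^2 + (lam 1)^2 + (lam 2)^2 = t^2 + t^2 + s^2 := ms_sumsq hmseq
    have hprod : lam 0 * lam 1 * lam 2 = t * t * s := ms_prod hmseq
    have htr0 : lam 0 + lam 1 + lam 2 = 0 := by
      have h8 := hX0tr; rwa [hdec, fact_trace U0 lam hU0'] at h8
    have hst : s = -2 * t := by linarith
    have hSX : (X0 * X0).trace = 6 * t^2 := by
      rw [hdec, fact_sq U0 lam hU0', hsumsq, hst]; ring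
    have hDX : X0.det = -2 * t^3 := by
      rw [hdec, fact_det U0 lam hU0, hprod, hst]; ring
    have htne : t ≠ 0 := by
      intro ht0
      have hpos := trace_sq_pos X0 hX0s hX0ne
      rw [hSX, ht0] at hpos; norm_num at hpos
    have hYex : ∃ Y ∈ W, ∀ c : ℝ, Y ≠ c • X0 := by
      by_contra hcon
      push_neg at hcon
      have hle : W ≤ Submodule.span ℝ {X0} := by
        intro y hy
        obtain ⟨c, hc⟩ := hcon y hy
        rw [hc]
        exact Submodule.smul_mem _ _ (Submodule.mem_span_singleton_self X0)
      have hfr := Submodule.finrank_mono hle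
      rw [hdim, finrank_span_singleton hX0ne] at hfr
      omega
    obtain ⟨Y, hYW, hYind⟩ := hYex
    intro A hAs hAtr
    obtain ⟨UA, alpha, hUA, hUA', hdecA⟩ := spec A hAs
    have hsum0 : alpha 0 + alpha 1 + alpha 2 = 0 := by
      have h9 := hAtr; rwa [hdecA, fact_trace UA alpha hUA'] at h9
    have hineq : 54 * A.det^2 ≤ ((A*A).trace)^3 := by
      rw [hdecA, fact_det UA alpha hUA, fact_sq UA alpha hUA']
      exact eig_ineq _ _ _ hsum0
    set M : ℝ → Mat := fun θ => Real.cos θ • X0 + Real.sin θ • Y with hMdef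
    have hMW : ∀ θ, M θ ∈ W := fun θ => W.add_mem (W.smul_mem _ hX0W) (W.smul_mem _ hYW)
    have hMs : ∀ θ, (M θ)ᵀ = M θ := by
      intro θ
      rw [hMdef]
      simp only [transpose_add, transpose_smul, hX0s, (hW Y hYW).1]
    have hMne : ∀ θ, M θ ≠ 0 := by
      intro θ h0
      rcases eq_or_ne (Real.sin θ) 0 with hsin | hsin
      · have hcos : Real.cos θ ≠ 0 := by
          intro hcos
          have h10 := Real.sin_sq_add_cos_sq θ
          rw [hsin, hcos] at h10; norm_num at h10
        rw [hMdef] at h0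
        simp only [hsin, zero_smul, add_zero] at h0
        exact hX0ne ((smul_eq_zero.mp h0).resolve_left hcos)
      · apply hYind ((Real.sin θ)⁻¹ * (-(Real.cos θ)))
        have h1 : Real.sin θ • Y = -(Real.cos θ • X0) := by
          rw [hMdef] at h0
          simp only at h0
          rw [add_comm] at h0
          exact add_eq_zero_iff_eq_neg.mp h0
        have h2 := congrArg (fun z => (Real.sin θ)⁻¹ • z) h1
        simp only [smul_smul, inv_mul_cancel₀ hsin, one_smul, smul_neg] at h2
        rw [h2, ← smul_smul, ← neg_smul, smul_smul]
        ring_nf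
    have hSpos : ∀ θ, 0 < (M θ * M θ).trace := fun θ => trace_sq_pos _ (hMs θ) (hMne θ)
    set h : ℝ → ℝ :=
      fun θ => (Real.sqrt ((A*A).trace / (M θ * M θ).trace))^3 * (M θ).det with hhdef
    have hMcont : Continuous M := by
      rw [hMdef]
      exact (Real.continuous_cos.smul continuous_const).add
        (Real.continuous_sin.smul continuous_const)
    have hScont : Continuous fun θ => (M θ * M θ).trace :=
      (hMcont.matrix_mul hMcont).matrix_trace
    have hhcont : Continuous h := by
      rw [hhdef]
      exact ((Real.continuous_sqrt.comp
        (continuous_const.div hScont (fun θ => (hSpos θ).ne'))).pow 3).mul hMcont.matrix_det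
    have hM0 : M 0 = X0 := by rw [hMdef]; simp
    have hMpi : M Real.pi = -X0 := by
      rw [hMdef]; simp [Real.cos_pi, Real.sin_pi]
    have hMM0 : M 0 * M 0 = X0 * X0 := by rw [hM0]
    have hMMpi : M Real.pi * M Real.pi = X0 * X0 := by rw [hMpi, neg_mul_neg]
    have hdetpi : (M Real.pi).det = -X0.det := by
      rw [hMpi, det_neg]
      norm_num
    have hpi : h Real.pi = -(h 0) := by
      rw [hhdef]
      simp only
      rw [hMMpi, hMM0, hdetpi, hM0]
      ring
    have hSA0 : 0 ≤ (A*A).trace := trace_sq_nonneg A hAs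
    have h0sq : (h 0)^2 = ((A*A).trace)^3 / 54 := by
      rw [hhdef]
      simp only
      rw [hMM0, hM0, hSX, hDX]
      have hq0 : (0:ℝ) ≤ (A*A).trace / (6*t^2) := by positivity
      have hr : Real.sqrt ((A*A).trace/(6*t^2)) ^2 = (A*A).trace/(6*t^2) :=
        Real.sq_sqrt hq0
      have hexp : ((Real.sqrt ((A*A).trace/(6*t^2)))^3 * (-2*t^3))^2
           = ((Real.sqrt ((A*A).trace/(6*t^2)))^2)^3 * (4*t^6) := by ring
      rw [hexp, hr]
      field_simp
      ring
    have hD2 : A.det^2 ≤ (h 0)^2 := by rw [h0sq]; linarith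
    have habs : |A.det| ≤ |h 0| := by
      nlinarith [abs_nonneg A.det, abs_nonneg (h 0), sq_abs A.det, sq_abs (h 0)]
    have hmem : A.det ∈ Set.uIcc (h 0) (h Real.pi) := by
      rw [hpi, Set.mem_uIcc]
      rcases le_total 0 (h 0) with hs0 | hs0
      · have he := abs_of_nonneg hs0
        right
        constructor
        · linarith [neg_abs_le A.det]
        · linarith [le_abs_self A.det]
      · have he := abs_of_nonpos hs0
        left
        constructor
        · linarith [neg_abs_le A.det]
        · linarith [le_abs_self A.det]
    obtain ⟨θ, _, hθ⟩ := intermediate_value_uIcc hhcont.continuousOn hmem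
    rw [hhdef] at hθ
    simp only at hθ
    set r := Real.sqrt ((A*A).trace / (M θ * M θ).trace) with hrdef
    set w := r • M θ with hwdef
    have hwW : w ∈ W := W.smul_mem r (hMW θ)
    have hws : wᵀ = w := by rw [hwdef, transpose_smul, hMs θ]
    have hr2 : r^2 = (A*A).trace / (M θ * M θ).trace := Real.sq_sqrt (div_nonneg hSA0 (hSpos θ).le)
    have hSw : (w*w).trace = (A*A).trace := by
      rw [hwdef, Matrix.smul_mul, Matrix.mul_smul, smul_smul, trace_smul, smul_eq_mul]
      have hrr : r * r = (A*A).trace / (M θ * M θ).trace := by rw [← hr2]; ring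
      rw [hrr, div_mul_cancel₀ _ (hSpos θ).ne']
    have hDw : w.det = A.det := by
      rw [hwdef, det_smul]
      have hcard : (Fintype.card (Fin 3)) = 3 := by simp
      rw [hcard]
      exact hθ
    have h1 : A.trace = w.trace := by rw [hAtr, (hW w hwW).2]
    have h2 : (A*A).trace = (w*w).trace := hSw.symm
    have h3 : A.det = w.det := hDw.symm
    obtain ⟨k, hko, hkd, hkc⟩ := conj_of_invariants A w hAs hws h1 h2 h3
    exact ⟨k, w, hwW, hko, hkd, hkc⟩
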